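/- Consider the flow φ_τ(v,z) = (e^{τA}v, ⟨e^{τ·tr A} Λ_τ^{A − (tr A)I} η, v⟩ + z·e^{τ·tr A}) on ℍ = ℝ² × ℝ, where Λ_τ^B η = ∫₀^τ e^{sBᵀ} η ds. Then each φ_τ is an automorphism of the Heisenberg group, i.e., φ_τ((v₁,z₁)∗(v₂,z₂)) = φ_τ(v₁,z₁) ∗ φ_τ(v₂,z₂), and φ_{τ+σ} = φ_τ ∘ φ_σ. -/

import Mathlib

open NormedSpace Matrix

/-- The Heisenberg product on ℍ = ℝ² × ℝ, with ℝ² modeled as Fin 2 → ℝ and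
θ the rotation by π/2. -/
noncomputable def Hmul (g h : (Fin 2 → ℝ) × ℝ) : (Fin 2 → ℝ) × ℝ :=
  (g.1 + h.1,
    g.2 + h.2 + (1 / 2) * (g.1 ⬝ᵥ (!![0, -1; 1, 0] : Matrix (Fin 2) (Fin 2) ℝ).mulVec h.1))

/-- The flow φ_τ(v,z) = (e^{τA}v, ⟨e^{τ·tr A} Λ_τ^{A−(tr A)I} η, v⟩ + z e^{τ·tr A}),
where Λ_τ^B η = ∫₀^τ e^{sBᵀ}η ds. -/
noncomputable def flow (A : Matrix (Fin 2) (Fin 2) ℝ) (η : Fin 2 → ℝ) (τ : ℝ)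
    (g : (Fin 2 → ℝ) × ℝ) : (Fin 2 → ℝ) × ℝ :=
  ((exp (τ • A)).mulVec g.1,
    (Real.exp (τ * A.trace) •
        ∫ u in (0:ℝ)..τ, (exp (u • (A - A.trace • (1 : Matrix (Fin 2) (Fin 2) ℝ))ᵀ)).mulVec η) ⬝ᵥ g.1
      + g.2 * Real.exp (τ * A.trace))


noncomputable def theta : Matrix (Fin 2) (Fin 2) ℝ := !![0, -1; 1, 0]

lemma theta_det : theta.det = 1 := by simp [theta, Matrix.det_fin_two_of]

lemma theta_unit : IsUnit theta := (Matrix.isUnit_iff_isUnit_det _).mpr (by simp [theta_det])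

lemma conj_lemma (A : Matrix (Fin 2) (Fin 2) ℝ) :
    Aᵀ * theta = theta * (A.trace • 1 - A) := by
  ext i j
  fin_cases i <;> fin_cases j <;>
    simp [theta, Matrix.mul_apply, Fin.sum_univ_two, Matrix.trace_fin_two]

lemma exp_scalar (r : ℝ) :
    exp (r • (1 : Matrix (Fin 2) (Fin 2) ℝ)) = Real.exp r • 1 := by
  letI : SeminormedRing (Matrix (Fin 2) (Fin 2) ℝ) := Matrix.linftyOpSemiNormedRing
  letI : NormedRing (Matrix (Fin 2) (Fin 2) ℝ) := Matrix.linftyOpNormedRing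
  letI : NormedAlgebra ℝ (Matrix (Fin 2) (Fin 2) ℝ) := Matrix.linftyOpNormedAlgebra
  letI : NormedAlgebra ℚ (Matrix (Fin 2) (Fin 2) ℝ) := Matrix.linftyOpNormedAlgebra
  have h1 : r • (1 : Matrix (Fin 2) (Fin 2) ℝ) =
      algebraMap ℝ (Matrix (Fin 2) (Fin 2) ℝ) r := (Algebra.algebraMap_eq_smul_one r).symm
  erw [h1, ← map_exp (algebraMap ℝ (Matrix (Fin 2) (Fin 2) ℝ))
      (continuous_algebraMap ℝ _) r]
  rw [← Real.exp_eq_exp_ℝ]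
  simp [Algebra.algebraMap_eq_smul_one]

lemma key1 (A : Matrix (Fin 2) (Fin 2) ℝ) (τ : ℝ) :
    (exp (τ • A))ᵀ * theta * exp (τ • A) = Real.exp (τ * A.trace) • theta := by
  have hc : (τ • A)ᵀ = theta * ((τ * A.trace) • 1 - τ • A) * theta⁻¹ := by
    have := conj_lemma (τ • A)
    rw [Matrix.trace_smul, smul_eq_mul] at this
    calc (τ • A)ᵀ = (τ • A)ᵀ * theta * theta⁻¹ := by
          rw [Matrix.mul_assoc, Matrix.mul_nonsing_inv _ (by simp [theta_det]), Matrix.mul_one]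
      _ = theta * ((τ * A.trace) • 1 - τ • A) * theta⁻¹ := by rw [this]
  have hexp : exp ((τ • A)ᵀ) =
      theta * exp ((τ * A.trace) • 1 - τ • A) * theta⁻¹ := by
    rw [hc, Matrix.exp_conj theta _ theta_unit]
  have hcomm : Commute ((τ * A.trace) • (1 : Matrix (Fin 2) (Fin 2) ℝ) - τ • A) (τ • A) := by
    apply Commute.sub_left
    · exact (Commute.one_left _).smul_left _
    · exact (Commute.refl _).smul_left _ |>.smul_right _
  calc (exp (τ • A))ᵀ * theta * exp (τ • A)
      = exp ((τ • A)ᵀ) * theta * exp (τ • A) := by rw [Matrix.exp_transpose]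
    _ = theta * (exp ((τ * A.trace) • 1 - τ • A) * exp (τ • A)) := by
        rw [hexp]
        simp only [Matrix.mul_assoc]
        rw [← Matrix.mul_assoc theta⁻¹ theta, Matrix.nonsing_inv_mul _ (by simp [theta_det]),
          Matrix.one_mul]
    _ = theta * exp (((τ * A.trace) • 1 - τ • A) + τ • A) := by
        rw [Matrix.exp_add_of_commute _ _ hcomm]
    _ = Real.exp (τ * A.trace) • theta := by
        rw [sub_add_cancel, exp_scalar]
        rw [Matrix.mul_smul, Matrix.mul_one]

lemma dot_key (M N : Matrix (Fin 2) (Fin 2) ℝ) (v w : Fin 2 → ℝ) :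
    (M.mulVec v) ⬝ᵥ N.mulVec w = v ⬝ᵥ (Mᵀ * N).mulVec w := by
  rw [← Matrix.mulVec_mulVec, Matrix.dotProduct_mulVec v, Matrix.vecMul_transpose]

lemma part1 (A : Matrix (Fin 2) (Fin 2) ℝ) (η : Fin 2 → ℝ) (τ : ℝ)
    (g h : (Fin 2 → ℝ) × ℝ) :
    flow A η τ (Hmul g h) = Hmul (flow A η τ g) (flow A η τ h) := by
  have hd : ((exp (τ • A)).mulVec g.1) ⬝ᵥ theta.mulVec ((exp (τ • A)).mulVec h.1)
      = Real.exp (τ * A.trace) * (g.1 ⬝ᵥ theta.mulVec h.1) := by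
    rw [dot_key, Matrix.mulVec_mulVec, key1, Matrix.smul_mulVec, dotProduct_smul,
      smul_eq_mul]
  unfold flow Hmul
  refine Prod.ext ?_ ?_
  · simp [Matrix.mulVec_add]
  · show _ = _
    have hθ : (!![0, -1; 1, 0] : Matrix (Fin 2) (Fin 2) ℝ) = theta := rfl
    simp only [hθ, hd, dotProduct_add]
    ring

section Part2

variable (A : Matrix (Fin 2) (Fin 2) ℝ) (η : Fin 2 → ℝ)

/-- abbreviation for the matrix appearing in the integrand -/
noncomputable def Dm (A : Matrix (Fin 2) (Fin 2) ℝ) : Matrix (Fin 2) (Fin 2) ℝ :=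
  (A - A.trace • (1 : Matrix (Fin 2) (Fin 2) ℝ))ᵀ

noncomputable def fv (A : Matrix (Fin 2) (Fin 2) ℝ) (η : Fin 2 → ℝ) (u : ℝ) : Fin 2 → ℝ :=
  (exp (u • Dm A)).mulVec η

lemma fv_cont : Continuous (fv A η) := by
  letI : SeminormedRing (Matrix (Fin 2) (Fin 2) ℝ) := Matrix.linftyOpSemiNormedRing
  letI : NormedRing (Matrix (Fin 2) (Fin 2) ℝ) := Matrix.linftyOpNormedRing
  letI : NormedAlgebra ℝ (Matrix (Fin 2) (Fin 2) ℝ) := Matrix.linftyOpNormedAlgebra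
  letI : NormedAlgebra ℚ (Matrix (Fin 2) (Fin 2) ℝ) := Matrix.linftyOpNormedAlgebra
  have h1 : Continuous fun u : ℝ => exp (u • Dm A) :=
    exp_continuous.comp (continuous_id.smul continuous_const)
  exact h1.matrix_mulVec continuous_const

lemma fv_integrable (a b : ℝ) : IntervalIntegrable (fv A η) MeasureTheory.volume a b :=
  (fv_cont A η).intervalIntegrable a b

/-- the continuous linear map `v ↦ M *ᵥ v` -/
noncomputable def mulVecCLM (M : Matrix (Fin 2) (Fin 2) ℝ) : (Fin 2 → ℝ) →L[ℝ] (Fin 2 → ℝ) :=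
  LinearMap.toContinuousLinearMap M.mulVecLin

lemma lam_split (τ σ : ℝ) :
    (∫ u in (0:ℝ)..(τ + σ), fv A η u) =
      (∫ u in (0:ℝ)..σ, fv A η u) + (exp (σ • Dm A)).mulVec (∫ u in (0:ℝ)..τ, fv A η u) := by
  have hsplit : (∫ u in (0:ℝ)..σ, fv A η u) + (∫ u in σ..(τ + σ), fv A η u)
      = ∫ u in (0:ℝ)..(τ + σ), fv A η u :=
    intervalIntegral.integral_add_adjacent_intervals (fv_integrable A η 0 σ)
      (fv_integrable A η σ (τ + σ))
  have hshift : (∫ u in σ..(τ + σ), fv A η u) = ∫ u in (0:ℝ)..τ, fv A η (u + σ) := by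
    rw [intervalIntegral.integral_comp_add_right (fun u => fv A η u) σ, zero_add, add_comm τ σ]
  have hfu : ∀ u : ℝ, fv A η (u + σ) = (exp (σ • Dm A)).mulVec (fv A η u) := by
    intro u
    have : (u + σ) • Dm A = σ • Dm A + u • Dm A := by rw [add_smul, add_comm]
    rw [fv, this, Matrix.exp_add_of_commute _ _
      (((Commute.refl (Dm A)).smul_left σ).smul_right u), fv, ← Matrix.mulVec_mulVec]
  have hpull : (∫ u in (0:ℝ)..τ, (exp (σ • Dm A)).mulVec (fv A η u))
      = (exp (σ • Dm A)).mulVec (∫ u in (0:ℝ)..τ, fv A η u) := by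
    have := (mulVecCLM (exp (σ • Dm A))).intervalIntegral_comp_comm (fv_integrable A η 0 τ)
    simpa [mulVecCLM] using this
  rw [← hsplit, hshift]
  congr 1
  rw [← hpull]
  exact intervalIntegral.integral_congr fun u _ => hfu u

end Part2

lemma dot_key2 (M : Matrix (Fin 2) (Fin 2) ℝ) (v w : Fin 2 → ℝ) :
    v ⬝ᵥ M.mulVec w = (Mᵀ.mulVec v) ⬝ᵥ w := by
  rw [Matrix.dotProduct_mulVec, ← Matrix.vecMul_transpose, Matrix.transpose_transpose]

lemma exp_D (A : Matrix (Fin 2) (Fin 2) ℝ) (σ : ℝ) :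
    (exp (σ • A))ᵀ = Real.exp (σ * A.trace) • exp (σ • Dm A) := by
  rw [← Matrix.exp_transpose]
  have h : (σ • A)ᵀ = σ • Dm A + (σ * A.trace) • 1 := by
    simp only [Dm, Matrix.transpose_smul, Matrix.transpose_sub, Matrix.transpose_one,
      Matrix.transpose_smul, smul_sub, smul_smul]
    abel
  rw [h, Matrix.exp_add_of_commute _ _
      (((Commute.one_right (σ • Dm A)).smul_right (σ * A.trace))), exp_scalar,
    Matrix.mul_smul, Matrix.mul_one]

lemma part2 (A : Matrix (Fin 2) (Fin 2) ℝ) (η : Fin 2 → ℝ) (τ σ : ℝ) (g : (Fin 2 → ℝ) × ℝ) :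
    flow A η (τ + σ) g = flow A η τ (flow A η σ g) := by
  have hE : Real.exp ((τ + σ) * A.trace)
      = Real.exp (σ * A.trace) * Real.exp (τ * A.trace) := by
    rw [← Real.exp_add]; ring_nf
  have hM : exp ((τ + σ) • A) = exp (τ • A) * exp (σ • A) := by
    rw [add_smul, Matrix.exp_add_of_commute _ _
      (((Commute.refl A).smul_left τ).smul_right σ)]
  unfold flow
  refine Prod.ext ?_ ?_
  · show exp ((τ + σ) • A) *ᵥ g.1 = exp (τ • A) *ᵥ (exp (σ • A) *ᵥ g.1)
    rw [hM, ← Matrix.mulVec_mulVec]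
  · show (Real.exp ((τ + σ) * A.trace) • ∫ u in (0:ℝ)..(τ + σ), fv A η u) ⬝ᵥ g.1
        + g.2 * Real.exp ((τ + σ) * A.trace)
      = (Real.exp (τ * A.trace) • ∫ u in (0:ℝ)..τ, fv A η u) ⬝ᵥ (exp (σ • A) *ᵥ g.1)
        + ((Real.exp (σ * A.trace) • ∫ u in (0:ℝ)..σ, fv A η u) ⬝ᵥ g.1
            + g.2 * Real.exp (σ * A.trace)) * Real.exp (τ * A.trace)
    have h1 : (Real.exp (τ * A.trace) • ∫ u in (0:ℝ)..τ, fv A η u) ⬝ᵥ (exp (σ • A) *ᵥ g.1)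
        = ((Real.exp (σ * A.trace) * Real.exp (τ * A.trace)) •
            ((exp (σ • Dm A)).mulVec (∫ u in (0:ℝ)..τ, fv A η u))) ⬝ᵥ g.1 := by
      rw [dot_key2, exp_D, Matrix.smul_mulVec, Matrix.mulVec_smul, smul_smul]
    rw [lam_split A η τ σ, h1, hE]
    simp only [smul_add, add_dotProduct, smul_dotProduct, smul_eq_mul]
    ring

/-- Each φ_τ is an automorphism of the Heisenberg group, and τ ↦ φ_τ is a flow. -/
theorem stmt18 (A : Matrix (Fin 2) (Fin 2) ℝ) (η : Fin 2 → ℝ) :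
    (∀ τ : ℝ, ∀ g h : (Fin 2 → ℝ) × ℝ,
      flow A η τ (Hmul g h) = Hmul (flow A η τ g) (flow A η τ h)) ∧
    (∀ τ σ : ℝ, ∀ g : (Fin 2 → ℝ) × ℝ,
      flow A η (τ + σ) g = flow A η τ (flow A η σ g)) := by
  exact ⟨fun τ g h => part1 A η τ g h, fun τ σ g => part2 A η τ σ g⟩
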